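/- A sequence F defined by F(n) = ∏_{j ∣ n} c(j) for a positive-valued sequence c is GCD-morphic if and only if c satisfies condition (C1): for all k, n ≥ 1 with k < n and gcd(n, k) ≠ k, gcd(c(n), c(k)) = 1. -/

import Mathlib

open Finset

private lemma gcd_eq_iff_dvd' (n k : ℕ) : Nat.gcd n k = k ↔ k ∣ n := by
  constructor
  · intro h; rw [← h]; exact Nat.gcd_dvd_left n k
  · intro h; exact Nat.gcd_eq_right h

theorem gcd_morphic_iff_C1 (c : ℕ → ℕ) (hpos : ∀ j, 1 ≤ j → 1 ≤ c j)
    (F : ℕ → ℕ) (hFdef : ∀ n, F n = ∏ j ∈ n.divisors, c j) :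
    (∀ n m, 1 ≤ n → 1 ≤ m → Nat.gcd (F n) (F m) = F (Nat.gcd n m)) ↔
    (∀ k n, 1 ≤ k → 1 ≤ n → k < n → Nat.gcd n k ≠ k → Nat.gcd (c n) (c k) = 1) := by
  have hFpos : ∀ n, 1 ≤ n → 0 < F n := by
    intro n hn
    rw [hFdef]
    exact Finset.prod_pos (fun j hj => hpos j (Nat.pos_of_mem_divisors hj))
  have key : ∀ n m : ℕ, 1 ≤ n → 1 ≤ m →
      Nat.gcd (F n) (F m) =
        F (Nat.gcd n m) *
          Nat.gcd (∏ j ∈ n.divisors \ (Nat.gcd n m).divisors, c j)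
                  (∏ j ∈ m.divisors \ (Nat.gcd n m).divisors, c j) := by
    intro n m hn hm
    set g := Nat.gcd n m with hg
    have hsubn : g.divisors ⊆ n.divisors :=
      Nat.divisors_subset_of_dvd (by omega) (Nat.gcd_dvd_left n m)
    have hsubm : g.divisors ⊆ m.divisors :=
      Nat.divisors_subset_of_dvd (by omega) (Nat.gcd_dvd_right n m)
    have hFn : F n = F g * ∏ j ∈ n.divisors \ g.divisors, c j := by
      rw [hFdef, hFdef, mul_comm, Finset.prod_sdiff hsubn]
    have hFm : F m = F g * ∏ j ∈ m.divisors \ g.divisors, c j := by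
      rw [hFdef, hFdef, mul_comm, Finset.prod_sdiff hsubm]
    rw [hFn, hFm, Nat.gcd_mul_left]
  have hgpos : ∀ n m : ℕ, 1 ≤ n → 1 ≤ m → 1 ≤ Nat.gcd n m := fun n m hn hm =>
    Nat.gcd_pos_of_pos_left m hn
  constructor
  · -- GCD-morphic → C1
    intro H k n hk hn hkn hgcd
    have g := Nat.gcd n k
    have h1 := H n k hn hk
    rw [key n k hn hk] at h1
    have hFg := hFpos (Nat.gcd n k) (hgpos n k hn hk)
    have hone : Nat.gcd (∏ j ∈ n.divisors \ (Nat.gcd n k).divisors, c j)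
        (∏ j ∈ k.divisors \ (Nat.gcd n k).divisors, c j) = 1 := by
      nlinarith [Nat.gcd (∏ j ∈ n.divisors \ (Nat.gcd n k).divisors, c j)
        (∏ j ∈ k.divisors \ (Nat.gcd n k).divisors, c j)]
    -- c n divides the first product, c k the second
    have hnmem : n ∈ n.divisors \ (Nat.gcd n k).divisors := by
      rw [Finset.mem_sdiff, Nat.mem_divisors, Nat.mem_divisors]
      refine ⟨⟨dvd_rfl, by omega⟩, ?_⟩
      rintro ⟨hdvd, -⟩
      have := Nat.le_of_dvd (hgpos n k hn hk) hdvd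
      have := Nat.gcd_le_right (n := k) n hk
      omega
    have hkmem : k ∈ k.divisors \ (Nat.gcd n k).divisors := by
      rw [Finset.mem_sdiff, Nat.mem_divisors, Nat.mem_divisors]
      refine ⟨⟨dvd_rfl, by omega⟩, ?_⟩
      rintro ⟨hdvd, -⟩
      exact hgcd (Nat.dvd_antisymm (Nat.gcd_dvd_right n k) hdvd)
    have hd1 : c n ∣ ∏ j ∈ n.divisors \ (Nat.gcd n k).divisors, c j :=
      Finset.dvd_prod_of_mem c hnmem
    have hd2 : c k ∣ ∏ j ∈ k.divisors \ (Nat.gcd n k).divisors, c j :=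
      Finset.dvd_prod_of_mem c hkmem
    have := Nat.dvd_gcd (dvd_trans (Nat.gcd_dvd_left (c n) (c k)) hd1)
      (dvd_trans (Nat.gcd_dvd_right (c n) (c k)) hd2)
    rw [hone] at this
    exact Nat.dvd_one.mp this
  · -- C1 → GCD-morphic
    intro H n m hn hm
    rw [key n m hn hm]
    set g := Nat.gcd n m with hg
    have hcop : ∀ j ∈ n.divisors \ g.divisors, ∀ j' ∈ m.divisors \ g.divisors,
        Nat.Coprime (c j) (c j') := by
      intro j hj j' hj'
      rw [Finset.mem_sdiff, Nat.mem_divisors, Nat.mem_divisors] at hj hj'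
      obtain ⟨⟨hjn, -⟩, hjg⟩ := hj
      obtain ⟨⟨hjm, -⟩, hjg'⟩ := hj'
      have hgne : g ≠ 0 := by have := hgpos n m hn hm; omega
      have hjpos : 1 ≤ j := Nat.pos_of_dvd_of_pos hjn (by omega)
      have hjpos' : 1 ≤ j' := Nat.pos_of_dvd_of_pos hjm (by omega)
      have hndvd1 : ¬ j ∣ j' := fun h =>
        hjg ⟨Nat.dvd_gcd hjn (h.trans hjm), hgne⟩
      have hndvd2 : ¬ j' ∣ j := fun h =>
        hjg' ⟨Nat.dvd_gcd (h.trans hjn) hjm, hgne⟩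
      rcases lt_trichotomy j j' with hlt | heq | hlt
      · exact Nat.coprime_comm.mp
          (H j j' hjpos hjpos' hlt (fun h => hndvd1 ((gcd_eq_iff_dvd' j' j).mp h)))
      · exact absurd (heq ▸ dvd_rfl) hndvd1
      · exact H j' j hjpos' hjpos hlt (fun h => hndvd2 ((gcd_eq_iff_dvd' j j').mp h))
    have : Nat.Coprime (∏ j ∈ n.divisors \ g.divisors, c j)
        (∏ j ∈ m.divisors \ g.divisors, c j) :=
      Nat.Coprime.prod_left fun j hj =>
        Nat.Coprime.prod_right fun j' hj' => hcop j hj j' hj'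
    rw [this, mul_one]
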